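/- Symmetry of null tail counts: suppose the random vector W ∈ ℝ^p satisfies (W_1,…,W_p) =_d (ε_1·W_1,…,ε_p·W_p) for any sign vector ε ∈ {±1}^p independent of W with ε_j = +1 for all non-null j and ε_j i.i.d. uniform on {±1} for null j. Then for every t > 0, the random variable #{null j : W_j ≥ t} has the same distribution as #{null j : W_j ≤ −t}. -/

import Mathlib

open MeasureTheory ProbabilityTheory

/-- The law of a uniform random sign: `(1/2)δ_{+1} + (1/2)δ_{-1}` on `ℝ`. -/
noncomputable def signUniform : MeasureTheory.Measure ℝ :=
  (2⁻¹ : ENNReal) • MeasureTheory.Measure.dirac (1 : ℝ)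
    + (2⁻¹ : ENNReal) • MeasureTheory.Measure.dirac (-1 : ℝ)

instance : IsProbabilityMeasure signUniform := by
  constructor
  simp [signUniform]
  rw [ENNReal.inv_two_add_inv_two]

lemma signUniform_neg : Measure.map (fun r : ℝ => -r) signUniform = signUniform := by
  rw [signUniform, Measure.map_add _ _ measurable_neg, Measure.map_smul, Measure.map_smul,
    Measure.map_dirac' measurable_neg, Measure.map_dirac' measurable_neg]
  simp [add_comm]

lemma card_filter_measurable {p : ℕ} (null : Finset (Fin p)) (s : Set ℝ)
    [DecidablePred (· ∈ s)] (hs : MeasurableSet s) :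
    Measurable (fun x : Fin p → ℝ => (null.filter fun j => x j ∈ s).card) := by
  simp_rw [Finset.card_filter]
  refine Finset.measurable_sum _ (fun j _ => ?_)
  exact Measurable.ite ((measurable_pi_apply j) hs) measurable_const measurable_const

/-- **Symmetry of null tail counts**: suppose the random vector `W ∈ ℝ^p` satisfies
`(W_1,…,W_p) =_d (ε_1 W_1,…,ε_p W_p)` where `ε ∈ {±1}^p` is independent of `W`, with
`ε_j = +1` for all non-null `j` and `ε_j` i.i.d. uniform on `{±1}` for null `j`.
(This is expressed by pushing the product of the law of `W` and the law of `ε`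
forward along coordinatewise multiplication.)  Then, for every `t > 0`, the count
`#{null j : W_j ≥ t}` has the same distribution as `#{null j : W_j ≤ −t}`. -/
theorem null_tail_counts_symmetric {p : ℕ}
    {Ω : Type*} [MeasurableSpace Ω] (μ : Measure Ω) [IsProbabilityMeasure μ]
    (W : Ω → Fin p → ℝ) (hWmeas : Measurable W)
    (null : Finset (Fin p))
    (hsym : Measure.map
        (fun x : (Fin p → ℝ) × (Fin p → ℝ) => fun j => x.2 j * x.1 j)
        ((Measure.map W μ).prod
          (Measure.pi fun j : Fin p =>
            if j ∈ null then signUniform else MeasureTheory.Measure.dirac (1 : ℝ)))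
      = Measure.map W μ) :
    ∀ t : ℝ, 0 < t →
      Measure.map (fun ω => (null.filter fun j => t ≤ W ω j).card) μ
        = Measure.map (fun ω => (null.filter fun j => W ω j ≤ -t).card) μ := by
  classical
  intro t ht
  set ν : Measure (Fin p → ℝ) := Measure.map W μ with hν
  set π : Measure (Fin p → ℝ) :=
    Measure.pi fun j : Fin p =>
      if j ∈ null then signUniform else MeasureTheory.Measure.dirac (1 : ℝ) with hπ
  have hfactor : ∀ j : Fin p, IsProbabilityMeasure
      (if j ∈ null then signUniform else MeasureTheory.Measure.dirac (1 : ℝ)) := by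
    intro j
    by_cases hj : j ∈ null <;> simp [hj] <;> infer_instance
  haveI := hfactor
  haveI : IsProbabilityMeasure ν := Measure.isProbabilityMeasure_map hWmeas.aemeasurable
  -- the sign flip on null coordinates
  set g : (Fin p → ℝ) → (Fin p → ℝ) := fun e j => if j ∈ null then -e j else e j with hg
  have hgmp : MeasurePreserving g π π := by
    have := measurePreserving_pi
      (fun j : Fin p => if j ∈ null then signUniform else MeasureTheory.Measure.dirac (1 : ℝ))
      (fun j : Fin p => if j ∈ null then signUniform else MeasureTheory.Measure.dirac (1 : ℝ))
      (f := fun j : Fin p => fun r : ℝ => if j ∈ null then -r else r) ?_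
    · convert this using 2
    · intro j
      by_cases hj : j ∈ null
      · simpa [hj] using
          (⟨measurable_neg, signUniform_neg⟩ : MeasurePreserving (fun r : ℝ => -r)
            signUniform signUniform)
      · simp only [if_neg hj]; exact MeasurePreserving.id _
  -- the multiplication map
  set m : (Fin p → ℝ) × (Fin p → ℝ) → (Fin p → ℝ) :=
    fun x => fun j => x.2 j * x.1 j with hm
  have hmmeas : Measurable m := by
    refine measurable_pi_iff.mpr fun j => ?_
    exact ((measurable_pi_apply j).comp measurable_snd).mul
      ((measurable_pi_apply j).comp measurable_fst)
  -- ν is invariant under the flip g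
  have hflip : Measure.map g ν = ν := by
    have hcomm : g ∘ m = m ∘ (Prod.map id g) := by
      funext x
      funext j
      by_cases hj : j ∈ null <;> simp [g, m, hj, Prod.map, neg_mul]
    calc Measure.map g ν = Measure.map g (Measure.map m (ν.prod π)) := by rw [hsym]
      _ = Measure.map (g ∘ m) (ν.prod π) := by
          rw [Measure.map_map hgmp.measurable hmmeas]
      _ = Measure.map (m ∘ Prod.map id g) (ν.prod π) := by rw [hcomm]
      _ = Measure.map m (Measure.map (Prod.map id g) (ν.prod π)) := by
          rw [Measure.map_map hmmeas (measurable_id.prodMap hgmp.measurable)]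
      _ = Measure.map m (ν.prod π) := by
          rw [((MeasurePreserving.id ν).prod hgmp).map_eq]
      _ = ν := hsym
  -- counts as functions of the vector
  set cge : (Fin p → ℝ) → ℕ := fun x => (null.filter fun j => t ≤ x j).card with hcge
  set cle : (Fin p → ℝ) → ℕ := fun x => (null.filter fun j => x j ≤ -t).card with hcle
  have hcge_meas : Measurable cge := by
    simpa [cge] using card_filter_measurable null (Set.Ici t) measurableSet_Ici
  have hcle_meas : Measurable cle := by
    simpa [cle] using card_filter_measurable null (Set.Iic (-t)) measurableSet_Iic
  have hkey : cge ∘ g = cle := by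
    funext x
    simp only [Function.comp, cge, cle, g]
    congr 1
    refine Finset.filter_congr fun j hj => ?_
    simp [hj, le_neg]
  calc Measure.map (fun ω => (null.filter fun j => t ≤ W ω j).card) μ
      = Measure.map (cge ∘ W) μ := rfl
    _ = Measure.map cge ν := (Measure.map_map hcge_meas hWmeas).symm
    _ = Measure.map cge (Measure.map g ν) := by rw [hflip]
    _ = Measure.map (cge ∘ g) ν := Measure.map_map hcge_meas hgmp.measurable
    _ = Measure.map cle ν := by rw [hkey]
    _ = Measure.map (cle ∘ W) μ := Measure.map_map hcle_meas hWmeas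
    _ = Measure.map (fun ω => (null.filter fun j => W ω j ≤ -t).card) μ := rfl
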